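/- arXiv:0801.1418 — 3 statements merged into one kernel-verified Lean document; each statement's English description precedes it below -/
import Mathlib

section
/- Let k be an algebraically closed field of characteristic p > 0 and let g be a nonzero rational function in k(z) with g(x) = 1 at a point x of the projective line. If ω = dg/g has a zero at x, then ord_x(ω) + 1 is not divisible by p. -/
open PowerSeries

/-- Let `k` be an algebraically closed field of characteristic `p > 0` and let
`g` be invertible near the point `x` with `g(x) = 1` (written as a power series in a local
coordinate at `x`). If `ω = dg/g` has a zero at `x` of order `n ≥ 1`, then `n + 1` (the
conductor `ord_x(ω) + 1`) is not divisible by `p`. -/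
theorem stmt0 (k : Type*) [Field k] [IsAlgClosed k] (p : ℕ) [CharP k p] (hp : 0 < p)
    (g : PowerSeries k) (hg1 : PowerSeries.constantCoeff (R := k) g = 1)
    (ω : PowerSeries k) (hω : ω * g = PowerSeries.derivative k g)
    (n : ℕ) (hn : ω.order = n) (hzero : 1 ≤ n) :
    ¬ p ∣ (n + 1) := by
  intro hdvd
  -- coeff n of ω * g equals coeff n ω
  have hcn : PowerSeries.coeff n (ω * g) = PowerSeries.coeff n ω := by
    rw [PowerSeries.coeff_mul]
    rw [Finset.sum_eq_single (n, 0)]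
    · simp [hg1, PowerSeries.coeff_zero_eq_constantCoeff]
    · rintro ⟨i, j⟩ hij hne
      have hij' : i + j = n := Finset.HasAntidiagonal.mem_antidiagonal.mp hij
      have hi : i < n := by
        rcases lt_or_eq_of_le (Nat.le.intro hij') with h | h
        · exact h
        · exfalso; apply hne
          have : j = 0 := by omega
          simp [this, ← h, this ▸ hij']
      rw [PowerSeries.coeff_of_lt_order i (by rw [hn]; exact_mod_cast hi), zero_mul]
    · intro h
      exact absurd (Finset.HasAntidiagonal.mem_antidiagonal.mpr (by omega)) h
  -- coeff n of derivative g is (n+1) * coeff (n+1) g = 0 since p ∣ n+1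
  have hder : PowerSeries.coeff n (PowerSeries.derivative k g) = 0 := by
    rw [PowerSeries.coeff_derivative]
    have : ((n + 1 : ℕ) : k) = 0 := (CharP.cast_eq_zero_iff k p (n + 1)).mpr hdvd
    push_cast at this ⊢
    rw [this, mul_zero]
  -- but coeff n ω ≠ 0 since order ω = n
  have hne : PowerSeries.coeff n ω ≠ 0 := by
    have h : ω ≠ 0 := by intro h0; rw [h0, PowerSeries.order_zero] at hn; simp at hn
    have hco := PowerSeries.coeff_order (φ := ω) h
    have e : ω.order.toNat = n := by
      have := hn
      simp_all
    rwa [e] at hco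
  apply hne
  rw [← hcn, hω, hder]
end

section
/- Let A = (A_1, …, A_r) ∈ Z^r with r ≥ 2, all A_i nonzero, and Σ_i A_i = 0. Set n_A = Σ_i max(A_i, 0) and k_A = gcd(A_1, …, A_r). If there exists a bicolored plane tree with positive integer edge weights whose valency list is A (black vertices have valencies the positive A_i, white vertices have valencies the negatives of the negative A_i, and the valency of a vertex is the sum of the weights of its adjacent edges), then k_A divides the weight of every edge of the tree. -/
/-- Let `A = (A 1, …, A r) ∈ ℤ^r`, `r ≥ 2`, with all `A i` nonzero and
`∑ i, A i = 0`, and let `k_A = gcd (A 1, …, A r)`.  Suppose `T` is a bicolored tree with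
vertex set `Fin r` (vertex `i` is black if `A i > 0` and white if `A i < 0`, and every edge
joins a black and a white vertex) equipped with positive integer edge weights `w`, whose
valency list is `A`: the sum of the weights of the edges at vertex `i` is `|A i|`.
Then `k_A` divides the weight of every edge of `T`. -/
theorem stmt5 (r : ℕ) (hr : 2 ≤ r) (A : Fin r → ℤ) (hA0 : ∀ i, A i ≠ 0)
    (hsum : ∑ i, A i = 0)
    (G : SimpleGraph (Fin r)) (hT : G.IsTree)
    (hbicol : ∀ i j, G.Adj i j → (0 < A i ∧ A j < 0) ∨ (A i < 0 ∧ 0 < A j))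
    (w : Fin r → Fin r → ℕ) (hsymm : ∀ i j, w i j = w j i)
    (hpos : ∀ i j, G.Adj i j → 0 < w i j) (hzero : ∀ i j, ¬ G.Adj i j → w i j = 0)
    (hval : ∀ i, ∑ j, w i j = (A i).natAbs) :
    ∀ i j, G.Adj i j → (Finset.univ.gcd A : ℤ) ∣ (w i j : ℤ) := by
  classical
  intro i j hij
  set G' : SimpleGraph (Fin r) := G.deleteEdges {s(i, j)} with hG'
  -- the edge is a bridge
  have hbridge : ¬ G'.Reachable i j := by
    have := (SimpleGraph.isAcyclic_iff_forall_adj_isBridge.mp hT.IsAcyclic) hij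
    rw [SimpleGraph.isBridge_iff] at this
    exact this
  -- every vertex is reachable from i or from j in G'
  have hreach : ∀ v, G'.Reachable i v ∨ G'.Reachable j v := by
    have key : ∀ {a v : Fin r} (p : G.Walk a v),
        (G'.Reachable i a ∨ G'.Reachable j a) → (G'.Reachable i v ∨ G'.Reachable j v) := by
      intro a v p
      induction p with
      | nil => exact id
      | @cons a b v hab q ih =>
        intro ha
        apply ih
        by_cases he : s(a, b) = s(i, j)
        · rcases Sym2.eq_iff.mp he with ⟨rfl, rfl⟩ | ⟨rfl, rfl⟩
          · right; exact SimpleGraph.Reachable.refl _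
          · left; exact SimpleGraph.Reachable.refl _
        · have hadj : G'.Adj a b := by
            rw [hG', SimpleGraph.deleteEdges_adj]
            exact ⟨hab, by simpa using he⟩
          rcases ha with h | h
          · exact Or.inl (h.trans hadj.reachable)
          · exact Or.inr (h.trans hadj.reachable)
    intro v
    obtain ⟨p⟩ := hT.isConnected.preconnected i v
    exact key p (Or.inl (SimpleGraph.Reachable.refl _))
  set S : Finset (Fin r) := Finset.univ.filter (fun v => G'.Reachable i v) with hS
  have hiS : i ∈ S := Finset.mem_filter.mpr ⟨Finset.mem_univ _, SimpleGraph.Reachable.refl _⟩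
  have hjS : j ∉ S := by simp [hS, hbridge]
  -- crossing edges
  have hcross : ∀ v u, v ∈ S → u ∉ S → G.Adj v u → v = i ∧ u = j := by
    intro v u hv hu hadj
    by_cases he : s(v, u) = s(i, j)
    · rcases Sym2.eq_iff.mp he with ⟨rfl, rfl⟩ | ⟨rfl, rfl⟩
      · exact ⟨rfl, rfl⟩
      · exact absurd hv hjS
    · exfalso
      have hadj' : G'.Adj v u := by
        rw [hG', SimpleGraph.deleteEdges_adj]
        exact ⟨hadj, by simpa using he⟩
      have hv' : G'.Reachable i v := by simpa [hS] using hv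
      exact hu (by simp [hS]; exact hv'.trans hadj'.reachable)
  -- signs
  set ε : Fin r → ℤ := fun v => if 0 < A v then 1 else -1 with hε
  have hAeq : ∀ v, A v = ε v * ((A v).natAbs : ℤ) := by
    intro v
    have := hA0 v
    simp only [hε]
    split_ifs with h <;> omega
  have hεsq : ∀ v, ε v * ε v = 1 := by
    intro v; simp only [hε]; split_ifs <;> ring
  have hεadj : ∀ v u, G.Adj v u → ε v + ε u = 0 := by
    intro v u h
    rcases hbicol v u h with ⟨h1, h2⟩ | ⟨h1, h2⟩ <;> simp only [hε] <;>
      · split_ifs <;> omega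
  -- main computation
  have hsplit : ∀ v, ∑ u, (ε v * (w v u : ℤ)) =
      ∑ u ∈ S, (ε v * (w v u : ℤ)) + ∑ u ∈ Sᶜ, (ε v * (w v u : ℤ)) := by
    intro v
    exact (Finset.sum_add_sum_compl S _).symm
  have hmain : ∑ v ∈ S, A v =
      (∑ v ∈ S, ∑ u ∈ S, ε v * (w v u : ℤ)) + (∑ v ∈ S, ∑ u ∈ Sᶜ, ε v * (w v u : ℤ)) := by
    rw [← Finset.sum_add_distrib]
    refine Finset.sum_congr rfl fun v _ => ?_
    rw [hAeq v, ← hval v, ← hsplit v, ← Finset.mul_sum]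
    push_cast
    ring
  have hpart1 : (∑ v ∈ S, ∑ u ∈ S, ε v * (w v u : ℤ)) = 0 := by
    have hcomm : (∑ v ∈ S, ∑ u ∈ S, ε v * (w v u : ℤ))
        = ∑ v ∈ S, ∑ u ∈ S, ε u * (w v u : ℤ) := by
      rw [Finset.sum_comm]
      refine Finset.sum_congr rfl fun v _ => Finset.sum_congr rfl fun u _ => ?_
      rw [hsymm]
    have h2 : (∑ v ∈ S, ∑ u ∈ S, ε v * (w v u : ℤ))
        + (∑ v ∈ S, ∑ u ∈ S, ε v * (w v u : ℤ)) = 0 := by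
      nth_rewrite 2 [hcomm]
      rw [← Finset.sum_add_distrib]
      rw [show (0 : ℤ) = ∑ v ∈ S, (0:ℤ) by simp]
      refine Finset.sum_congr rfl fun v _ => ?_
      rw [← Finset.sum_add_distrib]
      rw [show (0 : ℤ) = ∑ u ∈ S, (0:ℤ) by simp]
      refine Finset.sum_congr rfl fun u _ => ?_
      by_cases hadj : G.Adj v u
      · have := hεadj v u hadj; ring_nf; nlinarith [this]
      · simp [hzero v u hadj]
    omega
  have hpart2 : (∑ v ∈ S, ∑ u ∈ Sᶜ, ε v * (w v u : ℤ)) = ε i * (w i j : ℤ) := by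
    rw [Finset.sum_eq_single_of_mem i hiS]
    · rw [Finset.sum_eq_single_of_mem j (Finset.mem_compl.mpr hjS)]
      intro u hu hne
      have hu' : u ∉ S := Finset.mem_compl.mp hu
      have : w i u = 0 := by
        apply hzero
        intro hadj
        exact hne (hcross i u hiS hu' hadj).2
      simp [this]
    · intro v hv hne
      apply Finset.sum_eq_zero
      intro u hu
      have hu' : u ∉ S := Finset.mem_compl.mp hu
      have : w v u = 0 := by
        apply hzero
        intro hadj
        exact hne (hcross v u hv hu' hadj).1
      simp [this]
  have hdvd : (Finset.univ.gcd A : ℤ) ∣ ε i * (w i j : ℤ) := by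
    rw [← hpart2, ← zero_add (∑ v ∈ S, ∑ u ∈ Sᶜ, ε v * (w v u : ℤ)), ← hpart1, ← hmain]
    exact Finset.dvd_sum fun v _ => Finset.gcd_dvd (Finset.mem_univ v)
  have : (w i j : ℤ) = ε i * (ε i * (w i j : ℤ)) := by
    rw [← mul_assoc, hεsq, one_mul]
  rw [this]
  exact hdvd.mul_left _
end

section
/- Let A = (A_1, …, A_r) ∈ Z^r with Σ_i A_i = 0 and all A_i nonzero, and suppose gcd(A_1, …, A_r) = 1, with A_1, …, A_s > 0 and A_{s+1}, …, A_r < 0 for some 1 ≤ s < r. For i = s+1, …, r define m_i = gcd(A_2, …, A_i + A_1, …, A_r) (the gcd of all entries except A_1, with A_i replaced by A_i + A_1). Then the integers m_{s+1}, …, m_r are pairwise coprime. -/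
/-- Let `A 0, …, A (r-1)` be nonzero integers with sum `0` and overall gcd `1`,
with `A i > 0` for `i < s` and `A i < 0` for `s ≤ i` (`1 ≤ s < r`).  For each `i` with
`s ≤ i` let `m i` be the gcd of the `(r-1)`-tuple obtained from `A` by deleting the entry
`A 0` and replacing `A i` by `A i + A 0`.  Then the `m i`, for `s ≤ i`, are pairwise
coprime. -/
theorem stmt6 (r s : ℕ) (hs : 1 ≤ s) (hsr : s < r) (A : Fin r → ℤ)
    (hA0 : ∀ i, A i ≠ 0) (hsum : ∑ i, A i = 0) (hgcd : Finset.univ.gcd A = 1)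
    (hpos : ∀ i : Fin r, (i : ℕ) < s → 0 < A i) (hneg : ∀ i : Fin r, s ≤ (i : ℕ) → A i < 0)
    (M : Fin r → ℤ)
    (hM : ∀ i, M i = (Finset.univ.erase (⟨0, by omega⟩ : Fin r)).gcd
        (fun j => if j = i then A j + A ⟨0, by omega⟩ else A j)) :
    ∀ i j : Fin r, s ≤ (i : ℕ) → s ≤ (j : ℕ) → i ≠ j → IsCoprime (M i) (M j) := by
  intro i j hi hj hij
  have hr0 : 0 < r := by omega
  set z : Fin r := ⟨0, by omega⟩ with hz
  have hiz : i ≠ z := by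
    intro h
    have : (i : ℕ) = 0 := by rw [h]
    omega
  have hjz : j ≠ z := by
    intro h
    have : (j : ℕ) = 0 := by rw [h]
    omega
  have hmem : ∀ k : Fin r, k ≠ z → k ∈ Finset.univ.erase z :=
    fun k hk => Finset.mem_erase.2 ⟨hk, Finset.mem_univ k⟩
  set d : ℤ := (Int.gcd (M i) (M j) : ℤ) with hd
  have hdMi : d ∣ M i := Int.gcd_dvd_left _ _
  have hdMj : d ∣ M j := Int.gcd_dvd_right _ _
  -- d ∣ A i (from M j's tuple at position i)
  have hdAi : d ∣ A i := by
    refine hdMj.trans ?_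
    rw [hM j]
    have := Finset.gcd_dvd (f := fun k => if k = j then A k + A z else A k) (hmem i hiz)
    simpa [hij] using this
  -- d ∣ A j (from M i's tuple at position j)
  have hdAj : d ∣ A j := by
    refine hdMi.trans ?_
    rw [hM i]
    have := Finset.gcd_dvd (f := fun k => if k = i then A k + A z else A k) (hmem j hjz)
    simpa [Ne.symm hij] using this
  -- d ∣ A i + A z
  have hdAiz : d ∣ A i + A z := by
    refine hdMi.trans ?_
    rw [hM i]
    have := Finset.gcd_dvd (f := fun k => if k = i then A k + A z else A k) (hmem i hiz)
    simpa using this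
  have hdAz : d ∣ A z := by
    have := hdAiz.sub hdAi
    simpa using this
  -- d divides every A k
  have hdall : ∀ k : Fin r, d ∣ A k := by
    intro k
    by_cases hkz : k = z
    · subst hkz; exact hdAz
    by_cases hki : k = i
    · subst hki; exact hdAi
    · refine hdMi.trans ?_
      rw [hM i]
      have := Finset.gcd_dvd (f := fun k => if k = i then A k + A z else A k) (hmem k hkz)
      simpa [hki] using this
  have hd1 : d ∣ 1 := by
    rw [← hgcd]
    exact Finset.dvd_gcd fun k _ => hdall k
  have : Int.gcd (M i) (M j) = 1 := by
    have := Int.natCast_dvd_natCast.mp (by simpa [hd] using hd1 : (Int.gcd (M i) (M j) : ℤ) ∣ ((1 : ℕ) : ℤ))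
    exact Nat.dvd_one.mp this
  exact Int.isCoprime_iff_gcd_eq_one.mpr this
end
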